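/- The language L₁ = {aⁿ b^{n+⌊√n⌋} : n ≥ 1} over the alphabet {a, b} is not context-free. -/

import Mathlib

namespace WPump

variable {T : Type}

/-- `n`-step derivations. -/
inductive DerivesIn (g : ContextFreeGrammar.{0} T) :
    List (Symbol T g.NT) → List (Symbol T g.NT) → ℕ → Prop
  | refl (u : List (Symbol T g.NT)) : DerivesIn g u u 0
  | head {u v w : List (Symbol T g.NT)} {n : ℕ} (huv : g.Produces u v)
      (hvw : DerivesIn g v w n) : DerivesIn g u w (n + 1)

variable {g : ContextFreeGrammar.{0} T}

lemma DerivesIn.toDerives {u v : List (Symbol T g.NT)} {n : ℕ}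
    (h : DerivesIn g u v n) : g.Derives u v := by
  induction h with
  | refl => rfl
  | head huv _ ih => exact huv.trans_derives ih

lemma derivesIn_of_derives {u v : List (Symbol T g.NT)}
    (h : g.Derives u v) : ∃ n, DerivesIn g u v n := by
  induction h using Relation.ReflTransGen.head_induction_on with
  | refl => exact ⟨0, .refl v⟩
  | head hstep _ ih => exact ⟨ih.choose + 1, .head hstep ih.choose_spec⟩

lemma DerivesIn.trans {u v w : List (Symbol T g.NT)} {m n : ℕ}
    (h₁ : DerivesIn g u v m) (h₂ : DerivesIn g v w n) : DerivesIn g u w (m + n) := by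
  induction h₁ with
  | refl => simpa using h₂
  | head huv _ ih => exact Nat.succ_add _ n ▸ DerivesIn.head huv (ih h₂)

lemma DerivesIn.append_left {u v : List (Symbol T g.NT)} {n : ℕ}
    (h : DerivesIn g u v n) (p : List (Symbol T g.NT)) :
    DerivesIn g (p ++ u) (p ++ v) n := by
  induction h with
  | refl => exact .refl _
  | head huv _ ih => exact .head (huv.append_left p) ih

lemma DerivesIn.append_right {u v : List (Symbol T g.NT)} {n : ℕ}
    (h : DerivesIn g u v n) (p : List (Symbol T g.NT)) :
    DerivesIn g (u ++ p) (v ++ p) n := by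
  induction h with
  | refl => exact .refl _
  | head huv _ ih => exact .head (huv.append_right p) ih

lemma rewrites_nil {r : ContextFreeRule T g.NT} {v : List (Symbol T g.NT)}
    (h : r.Rewrites [] v) : False := by
  cases h

lemma derivesIn_nil {v : List (Symbol T g.NT)} {n : ℕ}
    (h : DerivesIn g [] v n) : v = [] := by
  cases h with
  | refl => rfl
  | head huv _ => obtain ⟨r, -, hr⟩ := huv; exact absurd hr rewrites_nil

lemma rewrites_terminals {r : ContextFreeRule T g.NT} {w : List T} {v : List (Symbol T g.NT)}
    (h : r.Rewrites (w.map Symbol.terminal) v) : False := by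
  obtain ⟨p, q, hu, -⟩ := h.exists_parts
  rw [List.append_assoc, List.map_eq_append_iff] at hu
  obtain ⟨-, l₂, -, -, hl₂⟩ := hu
  rw [List.map_eq_append_iff] at hl₂
  obtain ⟨l₃, -, -, hl₃, -⟩ := hl₂
  cases l₃ with
  | nil => simp at hl₃
  | cons a t => simp at hl₃

lemma derivesIn_terminals {w : List T} {v : List (Symbol T g.NT)} {n : ℕ}
    (h : DerivesIn g (w.map Symbol.terminal) v n) : v = w.map Symbol.terminal := by
  cases h with
  | refl => rfl
  | head huv _ => obtain ⟨r, -, hr⟩ := huv; exact absurd hr rewrites_terminals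

lemma rewrites_single_nt {r : ContextFreeRule T g.NT} {A : g.NT} {v : List (Symbol T g.NT)}
    (h : r.Rewrites [Symbol.nonterminal A] v) : r.input = A ∧ v = r.output := by
  cases h with
  | head s => simpa using ⟨rfl, rfl⟩
  | cons x hrs => exact absurd hrs rewrites_nil


lemma rewrites_append {r : ContextFreeRule T g.NT} {s₁ s₂ v : List (Symbol T g.NT)}
    (h : r.Rewrites (s₁ ++ s₂) v) :
    (∃ w, r.Rewrites s₁ w ∧ v = w ++ s₂) ∨ (∃ w, r.Rewrites s₂ w ∧ v = s₁ ++ w) := by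
  obtain ⟨p, q, hu, hv⟩ := h.exists_parts
  rw [List.append_assoc] at hu
  rcases List.append_eq_append_iff.mp hu with ⟨a, ha₁, ha₂⟩ | ⟨c, hc₁, hc₂⟩
  · refine .inr ⟨a ++ r.output ++ q, ?_, ?_⟩
    · have := r.rewrites_of_exists_parts a q
      rw [ha₂]; simpa [List.append_assoc] using this
    · simp [hv, ha₁, List.append_assoc]
  · cases c with
    | nil =>
      refine .inr ⟨r.output ++ q, ?_, ?_⟩
      · have := r.rewrites_of_exists_parts [] q
        simp only [List.nil_append] at hc₂ this ⊢
        rw [← hc₂]; exact this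
      · simp [hv, hc₁, List.append_assoc]
    | cons x c' =>
      simp only [List.cons_append, List.cons.injEq, List.singleton_append,
        List.nil_append] at hc₂
      obtain ⟨hx, hq⟩ := hc₂
      refine .inl ⟨p ++ r.output ++ c', ?_, ?_⟩
      · have := r.rewrites_of_exists_parts p c'
        rw [hc₁, ← hx]
        simpa [List.append_assoc] using this
      · simp [hv, hq, List.append_assoc]

/-- Splitting a counted derivation along an append. -/
lemma derivesIn_append_split {s₁ s₂ w : List (Symbol T g.NT)} {n : ℕ}
    (h : DerivesIn g (s₁ ++ s₂) w n) :
    ∃ w₁ w₂ n₁ n₂, w = w₁ ++ w₂ ∧ n₁ + n₂ = n ∧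
      DerivesIn g s₁ w₁ n₁ ∧ DerivesIn g s₂ w₂ n₂ := by
  induction n generalizing s₁ s₂ with
  | zero =>
    cases h with
    | refl => exact ⟨s₁, s₂, 0, 0, rfl, rfl, .refl _, .refl _⟩
  | succ n ih =>
    cases h with
    | head huv hvw =>
      obtain ⟨r, hr, hrw⟩ := huv
      rcases rewrites_append hrw with ⟨u₁, hru, rfl⟩ | ⟨u₂, hru, rfl⟩
      · obtain ⟨w₁, w₂, n₁, n₂, hw, hn, h₁, h₂⟩ := ih hvw
        exact ⟨w₁, w₂, n₁ + 1, n₂, hw, by omega, .head ⟨r, hr, hru⟩ h₁, h₂⟩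
      · obtain ⟨w₁, w₂, n₁, n₂, hw, hn, h₁, h₂⟩ := ih hvw
        exact ⟨w₁, w₂, n₁, n₂ + 1, hw, by omega, h₁, .head ⟨r, hr, hru⟩ h₂⟩


/-- If a string `s` derives a long terminal word, some single symbol of `s`
(necessarily a nonterminal) derives a long piece of it. -/
lemma long_piece {s : List (Symbol T g.NT)} {w : List T} {n K : ℕ} (hK : 2 ≤ K)
    (h : DerivesIn g s (w.map Symbol.terminal) n)
    (hlen : K * s.length ≤ w.length) (hw : 1 ≤ w.length) :
    ∃ (pre mid post : List T) (B : g.NT) (n₁ n₂ : ℕ),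
      w = pre ++ mid ++ post ∧ n₁ + n₂ ≤ n ∧ K ≤ mid.length ∧
      DerivesIn g s
        (pre.map Symbol.terminal ++ [Symbol.nonterminal B] ++ post.map Symbol.terminal) n₁ ∧
      DerivesIn g [Symbol.nonterminal B] (mid.map Symbol.terminal) n₂ := by
  induction s generalizing w n with
  | nil =>
    have := derivesIn_nil h
    simp only [List.map_eq_nil_iff] at this
    subst this
    simp at hw
  | cons sym s' ih =>
    have h' : DerivesIn g ([sym] ++ s') (w.map Symbol.terminal) n := h
    obtain ⟨w₁, w₂, n₁, n₂, hw12, hn12, h₁, h₂⟩ := derivesIn_append_split h'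
    obtain ⟨u₁, u₂, rfl, hu₁, hu₂⟩ := List.map_eq_append_iff.mp hw12
    subst hu₁; subst hu₂
    by_cases hcase : K ≤ u₁.length
    · cases sym with
      | terminal t =>
        have ht : DerivesIn g (([t] : List T).map Symbol.terminal) (u₁.map Symbol.terminal) n₁ := by
          simpa using h₁
        have := derivesIn_terminals ht
        have hlen1 : u₁.length = 1 := by
          have := congrArg List.length this
          simpa using this
        omega
      | nonterminal B =>
        refine ⟨[], u₁, u₂, B, n₂, n₁, by simp, by omega, hcase, ?_, h₁⟩
        simpa using DerivesIn.append_left h₂ [Symbol.nonterminal B]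
    · push_neg at hcase
      have hlen' : K * s'.length ≤ u₂.length := by
        simp only [List.length_cons, List.length_append] at hlen hw ⊢
        have : K * (s'.length + 1) = K * s'.length + K := by ring
        omega
      have hw' : 1 ≤ u₂.length := by
        simp only [List.length_cons, List.length_append] at hlen hw ⊢
        have : K * (s'.length + 1) = K * s'.length + K := by ring
        nlinarith [Nat.zero_le (K * s'.length)]
      obtain ⟨pre', mid, post', B, a, b, hsplit, hab, hmid, hctx, hmidder⟩ := ih h₂ hlen' hw'
      refine ⟨u₁ ++ pre', mid, post', B, n₁ + a, b, by simp [hsplit], by omega, hmid, ?_, hmidder⟩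
      have step1 : DerivesIn g ([sym] ++ s') (u₁.map Symbol.terminal ++ s') n₁ :=
        h₁.append_right s'
      have step2 : DerivesIn g (u₁.map Symbol.terminal ++ s')
          (u₁.map Symbol.terminal ++
            (pre'.map Symbol.terminal ++ [Symbol.nonterminal B] ++ post'.map Symbol.terminal)) a :=
        hctx.append_left _
      have := step1.trans step2
      simpa [List.append_assoc] using this


/-- Max rule output length (plus 2, so it is ≥ 2). -/
def mOf (g : ContextFreeGrammar.{0} T) : ℕ := (g.rules.sup fun r => r.output.length) + 2

lemma two_le_mOf : 2 ≤ mOf g := Nat.le_add_left 2 _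

lemma output_le_mOf {r : ContextFreeRule T g.NT} (hr : r ∈ g.rules) :
    r.output.length ≤ mOf g :=
  le_trans (Finset.le_sup (f := fun r => r.output.length) hr) (Nat.le_add_right _ 2)

/-- "Element data": the nonterminal derives its word in the given number of steps. -/
def E (g : ContextFreeGrammar.{0} T) (x : g.NT × List T × ℕ) : Prop :=
  DerivesIn g [Symbol.nonterminal x.1] (x.2.1.map Symbol.terminal) x.2.2

/-- Chain relation. -/
def Rel (g : ContextFreeGrammar.{0} T) (x y : g.NT × List T × ℕ) : Prop :=
  ∃ v z k, x.2.1 = v ++ y.2.1 ++ z ∧ 1 ≤ k ∧ k + y.2.2 ≤ x.2.2 ∧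
    DerivesIn g [Symbol.nonterminal x.1]
      (v.map Symbol.terminal ++ [Symbol.nonterminal y.1] ++ z.map Symbol.terminal) k

lemma rel_trans : Transitive (Rel g) := by
  rintro ⟨A, wa, na⟩ ⟨B, wb, nb⟩ ⟨C, wc, nc⟩ ⟨v₁, z₁, k₁, hw₁, hk₁, hn₁, hd₁⟩
    ⟨v₂, z₂, k₂, hw₂, hk₂, hn₂, hd₂⟩
  refine ⟨v₁ ++ v₂, z₂ ++ z₁, k₁ + k₂, ?_, by omega, by omega, ?_⟩
  · simp only at hw₁ hw₂ ⊢
    rw [hw₁, hw₂]; simp [List.append_assoc]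
  · have step2 := (hd₂.append_left (v₁.map Symbol.terminal)).append_right (z₁.map Symbol.terminal)
    have := hd₁.trans (by simpa [List.append_assoc] using step2)
    simpa [List.append_assoc] using this

lemma DerivesIn.head_of_ne {u v : List (Symbol T g.NT)} {n : ℕ}
    (h : DerivesIn g u v n) (hne : u ≠ v) :
    ∃ w n', n = n' + 1 ∧ g.Produces u w ∧ DerivesIn g w v n' := by
  cases h with
  | refl => exact absurd rfl hne
  | head huv hvw => exact ⟨_, _, rfl, huv, hvw⟩

lemma chain (c : ℕ) {A : g.NT} {w : List T} {n : ℕ}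
    (h : DerivesIn g [Symbol.nonterminal A] (w.map Symbol.terminal) n)
    (hw : (mOf g) ^ (c + 1) ≤ w.length) :
    ∃ l : List (g.NT × List T × ℕ), l.length = c + 1 ∧ l.head? = some (A, w, n) ∧
      List.Chain' (Rel g) l ∧ ∀ x ∈ l, E g x := by
  induction c generalizing A w n with
  | zero =>
    exact ⟨[(A, w, n)], rfl, rfl, List.isChain_singleton _, by
      rintro x hx; simp only [List.mem_singleton] at hx; subst hx; exact h⟩
  | succ c ih =>
    have hm2 : 2 ≤ mOf g := two_le_mOf
    have hwlen : 2 ≤ w.length := by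
      calc 2 ≤ mOf g := hm2
      _ ≤ (mOf g) ^ (c + 2) := Nat.le_self_pow (by omega) _
      _ ≤ w.length := hw
    have hne : [Symbol.nonterminal A] ≠ w.map Symbol.terminal := by
      intro hcon
      have := congrArg List.length hcon
      simp at this
      omega
    obtain ⟨v, n', rfl, huv, hvw⟩ := h.head_of_ne hne
    obtain ⟨r, hr, hrw⟩ := huv
    obtain ⟨hin, rfl⟩ := rewrites_single_nt hrw
    have hK2 : 2 ≤ (mOf g) ^ (c + 1) :=
      le_trans hm2 (Nat.le_self_pow (by omega) _)
    have hlenK : (mOf g) ^ (c + 1) * r.output.length ≤ w.length := by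
      calc (mOf g) ^ (c + 1) * r.output.length ≤ (mOf g) ^ (c + 1) * mOf g :=
            Nat.mul_le_mul_left _ (output_le_mOf hr)
      _ = (mOf g) ^ (c + 2) := by ring
      _ ≤ w.length := hw
    obtain ⟨pre, mid, post, B, n₁, n₂, hsplit, hn, hmid, hctx, hmidder⟩ :=
      long_piece hK2 hvw hlenK (by omega)
    obtain ⟨l, hlen, hhead, hchain, hE⟩ := ih hmidder hmid
    refine ⟨(A, w, n' + 1) :: l, by simp [hlen], rfl, ?_, ?_⟩
    · unfold List.Chain'; rw [List.isChain_cons]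
      refine ⟨?_, hchain⟩
      rintro y hy
      rw [hhead] at hy
      simp only [Option.mem_def, Option.some.injEq] at hy
      subst hy
      exact ⟨pre, post, n₁ + 1, hsplit, by omega, by dsimp only; omega,
        .head ⟨r, hr, hin ▸ hrw⟩ hctx⟩
    · rintro x hx
      rcases List.mem_cons.mp hx with rfl | hx
      · exact DerivesIn.head ⟨r, hr, hin ▸ hrw⟩ hvw
      · exact hE x hx


lemma nt_ne_terminals (A : g.NT) (w : List T) :
    [Symbol.nonterminal A] ≠ w.map Symbol.terminal := by
  intro h
  cases w with
  | nil => simp at h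
  | cons a t =>
    rw [List.map_cons, List.cons.injEq] at h
    cases h.1

lemma nt_mem_inputs [DecidableEq g.NT] {x : g.NT × List T × ℕ} (hx : E g x) :
    x.1 ∈ g.rules.image ContextFreeRule.input := by
  obtain ⟨v, n', -, hp, -⟩ := hx.head_of_ne (nt_ne_terminals _ _)
  obtain ⟨r, hr, hrw⟩ := hp
  obtain ⟨hin, -⟩ := rewrites_single_nt hrw
  exact Finset.mem_image.mpr ⟨r, hr, hin⟩

lemma join_replicate_comm (y : List T) (p : ℕ) :
    (List.replicate p y).flatten ++ y = y ++ (List.replicate p y).flatten := by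
  induction p with
  | zero => simp
  | succ p ih => simp only [List.replicate_succ, List.flatten_cons, List.append_assoc, ih]

lemma pump_iter {B : g.NT} {v y : List T} {k : ℕ}
    (hd : DerivesIn g [Symbol.nonterminal B]
      (v.map Symbol.terminal ++ [Symbol.nonterminal B] ++ y.map Symbol.terminal) k) (p : ℕ) :
    g.Derives [Symbol.nonterminal B]
      (((List.replicate p v).flatten).map Symbol.terminal ++ [Symbol.nonterminal B] ++
        ((List.replicate p y).flatten).map Symbol.terminal) := by
  induction p with
  | zero => simpa using ContextFreeGrammar.Derives.refl _
  | succ p ih =>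
    have step2 := (ih.append_left (v.map Symbol.terminal)).append_right (y.map Symbol.terminal)
    have htrans := hd.toDerives.trans (by simpa [List.append_assoc] using step2)
    have hyc : (List.replicate p y).flatten ++ y = y ++ (List.replicate p y).flatten :=
      join_replicate_comm y p
    rw [List.replicate_succ, List.flatten_cons, List.replicate_succ (n := p) (a := y),
      List.flatten_cons, ← hyc]
    simp only [List.map_append]
    simpa [List.append_assoc] using htrans

/-- Weak pumping lemma for context-free grammars (no bound on `|vxy|`). -/
theorem weak_pumping (g : ContextFreeGrammar.{0} T) :
    ∃ K : ℕ, 1 ≤ K ∧ ∀ w ∈ g.language, K ≤ w.length →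
      ∃ u v x y z : List T, w = u ++ v ++ x ++ y ++ z ∧ 1 ≤ v.length + y.length ∧
        ∀ p : ℕ, u ++ (List.replicate p v).flatten ++ x ++ (List.replicate p y).flatten ++ z
          ∈ g.language := by
  classical
  set c := (g.rules.image ContextFreeRule.input).card with hc
  have hKpos : 1 ≤ (mOf g) ^ (c + 1) :=
    Nat.one_le_pow _ _ (by have := two_le_mOf (g := g); omega)
  refine ⟨(mOf g) ^ (c + 1), hKpos, ?_⟩
  intro w hw hwlen
  rw [ContextFreeGrammar.mem_language_iff] at hw
  have hex : ∃ n, DerivesIn g [Symbol.nonterminal g.initial] (w.map Symbol.terminal) n :=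
    derivesIn_of_derives hw
  set n := Nat.find hex with hn
  have hder := Nat.find_spec hex
  obtain ⟨l, hlen, hhead, hchain, hEall⟩ := chain c hder hwlen
  -- duplicate in the list of nonterminals
  have hnotnodup : ¬ (l.map Prod.fst).Nodup := by
    intro hnd
    have h1 : (l.map Prod.fst).toFinset ⊆ g.rules.image ContextFreeRule.input := by
      intro A hA
      rw [List.mem_toFinset, List.mem_map] at hA
      obtain ⟨x, hxl, rfl⟩ := hA
      exact nt_mem_inputs (hEall x hxl)
    have h2 := Finset.card_le_card h1
    rw [List.toFinset_card_of_nodup hnd, List.length_map, hlen] at h2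
    omega
  obtain ⟨X, hdup⟩ := List.exists_duplicate_iff_not_nodup.mpr hnotnodup
  rw [List.duplicate_iff_sublist, List.sublist_map_iff] at hdup
  obtain ⟨l', hsub, hmap⟩ := hdup
  obtain ⟨a, b, rfl⟩ : ∃ a b, l' = [a, b] := by
    cases l' with
    | nil => simp at hmap
    | cons a t =>
      cases t with
      | nil => simp at hmap
      | cons b t' =>
        cases t' with
        | nil => exact ⟨a, b, rfl⟩
        | cons c t'' => simp at hmap
  have hfst : a.1 = b.1 := by
    simp only [List.map_cons, List.map_nil, List.cons.injEq, and_true] at hmap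
    rw [← hmap.1, ← hmap.2]
  haveI : IsTrans (g.NT × List T × ℕ) (Rel g) := ⟨fun x y z hxy hyz => rel_trans (g := g) hxy hyz⟩
  have hpair := List.isChain_iff_pairwise.mp hchain
  have hRab : Rel g a b := by
    have := List.Pairwise.sublist hsub hpair
    rw [List.pairwise_cons] at this
    exact this.1 b (by simp)
  -- decompose l as head :: tail
  obtain ⟨tl, rfl⟩ : ∃ tl, l = (g.initial, w, n) :: tl := by
    cases l with
    | nil => simp at hhead
    | cons h t =>
      simp only [List.head?_cons, Option.some.injEq] at hhead
      exact ⟨t, by rw [hhead]⟩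
  -- start-to-a data
  have hstart : ∃ V Y k₀, w = V ++ a.2.1 ++ Y ∧ k₀ + a.2.2 ≤ n ∧
      DerivesIn g [Symbol.nonterminal g.initial]
        (V.map Symbol.terminal ++ [Symbol.nonterminal a.1] ++ Y.map Symbol.terminal) k₀ := by
    have : (List.Sublist [a, b] tl) ∨ (a = (g.initial, w, n) ∧ List.Sublist [b] tl) := by
      cases hsub with
      | cons _ h => exact .inl h
      | cons_cons _ h => exact .inr ⟨rfl, h⟩
    rcases this with h | ⟨rfl, -⟩
    · have hamem : a ∈ tl := (h.subset (by simp))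
      have hRstart : Rel g (g.initial, w, n) a := (List.pairwise_cons.mp hpair).1 a hamem
      obtain ⟨V, Y, k₀, hweq, _, hcnt, hd⟩ := hRstart
      exact ⟨V, Y, k₀, hweq, hcnt, hd⟩
    · exact ⟨[], [], 0, by simp, by simp, by simpa using DerivesIn.refl _⟩
  obtain ⟨V, Y, k₀, hweq, hcnt₀, hdstart⟩ := hstart
  obtain ⟨v, y, k, hwa, hk, hcntab, hdab⟩ := hRab
  have hEb := hEall b (hsub.subset (by simp))
  rw [← hfst] at hdab
  -- case split on v, y
  by_cases hvy : v = [] ∧ y = []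
  · -- contradiction with minimality of n
    exfalso
    obtain ⟨rfl, rfl⟩ := hvy
    simp only [List.nil_append, List.append_nil] at hwa
    have hmid : DerivesIn g [Symbol.nonterminal a.1] (b.2.1.map Symbol.terminal) b.2.2 := by
      rw [hfst]; exact hEb
    have hfull : DerivesIn g [Symbol.nonterminal g.initial] (w.map Symbol.terminal)
        (k₀ + b.2.2) := by
      have h2 := (hmid.append_left (V.map Symbol.terminal)).append_right (Y.map Symbol.terminal)
      have := hdstart.trans (by simpa [List.append_assoc] using h2)
      have hweq2 : w = V ++ b.2.1 ++ Y := by rw [hweq, hwa]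
      rw [hweq2]
      simpa [List.append_assoc] using this
    have hge := Nat.find_min' hex hfull
    omega
  · -- pumping
    have hvylen : 1 ≤ v.length + y.length := by
      rcases (not_and_or.mp hvy) with h | h
      · have := List.length_pos_iff.mpr h; omega
      · have := List.length_pos_iff.mpr h; omega
    refine ⟨V, v, b.2.1, y, Y, by rw [hweq, hwa]; simp [List.append_assoc], hvylen, ?_⟩
    intro p
    rw [ContextFreeGrammar.mem_language_iff]
    have hit := pump_iter hdab p
    have hx : g.Derives [Symbol.nonterminal a.1] (b.2.1.map Symbol.terminal) := by
      rw [hfst]; exact hEb.toDerives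
    have hmid2 : g.Derives [Symbol.nonterminal a.1]
        ((((List.replicate p v).flatten).map Symbol.terminal) ++ b.2.1.map Symbol.terminal ++
          (((List.replicate p y).flatten).map Symbol.terminal)) := by
      have := (hx.append_left (((List.replicate p v).flatten).map Symbol.terminal)).append_right
        (((List.replicate p y).flatten).map Symbol.terminal)
      exact hit.trans (by simpa [List.append_assoc] using this)
    have hfull := hdstart.toDerives.trans
      ((hmid2.append_left (V.map Symbol.terminal)).append_right
        (Y.map Symbol.terminal) |> (by simpa [List.append_assoc] using ·))
    simpa [List.append_assoc] using hfull


lemma count_flatten_replicate (a : Fin 2) (l : List (Fin 2)) (p : ℕ) :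
    ((List.replicate p l).flatten).count a = p * l.count a := by
  induction p with
  | zero => simp
  | succ p ih => simp [List.replicate_succ, ih]; ring

lemma count_fin2 (l : List (Fin 2)) : l.count 0 + l.count 1 = l.length := by
  induction l with
  | nil => simp
  | cons a t ih =>
    fin_cases a <;> simp [List.count_cons, ← ih] <;> omega

lemma arith (A B P Q : ℕ) (hPQ : 1 ≤ P + Q)
    (key : ∀ p, 1 ≤ A + p * P ∧ B + p * Q = (A + p * P) + Nat.sqrt (A + p * P)) : False := by
  have h0 := key 0
  simp only [Nat.zero_mul, Nat.add_zero] at h0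
  obtain ⟨hA1, hB⟩ := h0
  rcases Nat.eq_zero_or_pos P with hP | hP
  · have h1 := key 1
    rw [hP] at h1
    simp only [Nat.mul_zero, Nat.add_zero, Nat.one_mul] at h1
    omega
  · rcases le_or_gt Q P with hQP | hQP
    · set p := (B + 1) * (B + 1) with hp
      obtain ⟨-, hkey⟩ := key p
      have hpP : p ≤ p * P := Nat.le_mul_of_pos_right p hP
      have hs : B + 1 ≤ Nat.sqrt (A + p * P) := Nat.le_sqrt.mpr (by omega)
      have hmul : p * Q ≤ p * P := Nat.mul_le_mul_left p hQP
      omega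
    · set p := A + P + 1 with hp
      obtain ⟨-, hkey⟩ := key p
      have hsq : Nat.sqrt (A + p * P) < p := by
        rw [Nat.sqrt_lt]
        have h1 : p * p = p * A + p * P + p := by rw [hp]; ring
        have h2 : A ≤ p * A := Nat.le_mul_of_pos_left A (by omega)
        omega
      have hmul : p * P + p ≤ p * Q := by
        have : p * (P + 1) ≤ p * Q := Nat.mul_le_mul_left p hQP
        rw [Nat.mul_add, Nat.mul_one] at this
        exact this
      have hsA : A ≤ A + Nat.sqrt A := Nat.le_add_right _ _
      omega

end WPump

/-- The language `{aⁿ b^{n+⌊√n⌋} : n ≥ 1}` over the two-letter alphabet `Fin 2`,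
where `a = 0` and `b = 1`. -/
def L₁ : Language (Fin 2) :=
  {w | ∃ n : ℕ, 1 ≤ n ∧
    w = List.replicate n (0 : Fin 2) ++ List.replicate (n + Nat.sqrt n) (1 : Fin 2)}

theorem L₁_not_contextFree : ¬ L₁.IsContextFree := by
  rintro ⟨g, hg⟩
  obtain ⟨K, hK1, hpump⟩ := WPump.weak_pumping g
  have hwL : (List.replicate K (0 : Fin 2) ++
      List.replicate (K + Nat.sqrt K) (1 : Fin 2)) ∈ L₁ := ⟨K, hK1, rfl⟩
  have hwlen : K ≤ (List.replicate K (0 : Fin 2) ++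
      List.replicate (K + Nat.sqrt K) (1 : Fin 2)).length := by
    simp
  obtain ⟨u, v, x, y, z, hsplit, hvy, hp⟩ := hpump _ (by rw [hg]; exact hwL) hwlen
  have hPQ : 1 ≤ (v.count 0 + y.count 0) + (v.count 1 + y.count 1) := by
    have hv := WPump.count_fin2 v
    have hy := WPump.count_fin2 y
    omega
  apply WPump.arith (u.count 0 + x.count 0 + z.count 0) (u.count 1 + x.count 1 + z.count 1)
    (v.count 0 + y.count 0) (v.count 1 + y.count 1) hPQ
  intro p
  have hmem := hp p
  rw [hg] at hmem
  obtain ⟨np, hnp1, hweq⟩ := hmem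
  have hc0 : (u ++ (List.replicate p v).flatten ++ x ++ (List.replicate p y).flatten ++ z).count 0
      = (u.count 0 + x.count 0 + z.count 0) + p * (v.count 0 + y.count 0) := by
    simp [List.count_append, WPump.count_flatten_replicate]
    ring
  have hc1 : (u ++ (List.replicate p v).flatten ++ x ++ (List.replicate p y).flatten ++ z).count 1
      = (u.count 1 + x.count 1 + z.count 1) + p * (v.count 1 + y.count 1) := by
    simp [List.count_append, WPump.count_flatten_replicate]
    ring
  rw [hweq] at hc0 hc1
  have hr0 : (List.replicate np (0 : Fin 2) ++
      List.replicate (np + Nat.sqrt np) (1 : Fin 2)).count 0 = np := by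
    simp [List.count_append, List.count_replicate]
  have hr1 : (List.replicate np (0 : Fin 2) ++
      List.replicate (np + Nat.sqrt np) (1 : Fin 2)).count 1 = np + Nat.sqrt np := by
    simp [List.count_append, List.count_replicate]
  rw [hr0] at hc0
  rw [hr1] at hc1
  have e0 : np = (u.count 0 + x.count 0 + z.count 0) + p * (v.count 0 + y.count 0) := hc0
  refine ⟨by omega, ?_⟩
  rw [← e0]
  omega
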